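/- (Outer semicontinuity of the directional normal cone) For a closed set Ω ⊆ ℝⁿ, x̄ ∈ Ω and direction d ∈ ℝⁿ, the directional limiting normal cone defined via regular normals equals the one defined via limiting normals: N_Ω(x̄; d) = {ζ : ∃ tₖ ↓ 0, dₖ → d, ζₖ → ζ such that ζₖ ∈ N_Ω(x̄ + tₖdₖ) for all k}. -/

import Mathlib

open Filter Topology

noncomputable section

abbrev Euc (n : ℕ) := EuclideanSpace ℝ (Fin n)

/-- The directional neighborhood 𝒱_{ε,δ}(d). -/
def dirNbhd {n : ℕ} (ε δ : ℝ) (d : Euc n) : Set (Euc n) :=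
  {z | ‖z‖ < ε ∧ ‖‖d‖ • z - ‖z‖ • d‖ ≤ δ * (‖z‖ * ‖d‖)}

/-- The translated directional neighborhood xb + 𝒱_{ε,δ}(d). -/
def dirNbhdPt {n : ℕ} (xb : Euc n) (ε δ : ℝ) (d : Euc n) : Set (Euc n) :=
  (fun z => xb + z) '' dirNbhd ε δ d

/-- xₖ → xb in direction u : xₖ = xb + tₖ • uₖ with tₖ ↓ 0, uₖ → u. -/
def TendstoDir {n : ℕ} (x : ℕ → Euc n) (xb u : Euc n) : Prop :=
  ∃ t : ℕ → ℝ, ∃ v : ℕ → Euc n,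
    (∀ k, 0 < t k) ∧ Tendsto t atTop (𝓝 0) ∧ Tendsto v atTop (𝓝 u) ∧
    ∀ k, x k = xb + t k • v k

/-- The tangent (contingent) cone. -/
def tangentConeSeq {n : ℕ} (Ω : Set (Euc n)) (xb : Euc n) : Set (Euc n) :=
  {d | ∃ t : ℕ → ℝ, ∃ dk : ℕ → Euc n,
    (∀ k, 0 < t k) ∧ Tendsto t atTop (𝓝 0) ∧ Tendsto dk atTop (𝓝 d) ∧
    ∀ k, xb + t k • dk k ∈ Ω}

/-- The regular (Fréchet) normal cone; empty at points outside Ω. -/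
def regNormal {n : ℕ} (Ω : Set (Euc n)) (x : Euc n) : Set (Euc n) :=
  {ζ | x ∈ Ω ∧ ∀ ε > (0:ℝ), ∃ ρ > (0:ℝ), ∀ y ∈ Ω, ‖y - x‖ < ρ →
    (@inner ℝ _ _ ζ (y - x)) ≤ ε * ‖y - x‖}

/-- The limiting (Mordukhovich) normal cone. -/
def limNormal {n : ℕ} (Ω : Set (Euc n)) (xb : Euc n) : Set (Euc n) :=
  {ζ | ∃ xk : ℕ → Euc n, ∃ ζk : ℕ → Euc n,
    Tendsto xk atTop (𝓝 xb) ∧ Tendsto ζk atTop (𝓝 ζ) ∧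
    ∀ k, ζk k ∈ regNormal Ω (xk k)}

/-- The directional limiting normal cone N_Ω(xb; d). -/
def dirNormal {n : ℕ} (Ω : Set (Euc n)) (xb d : Euc n) : Set (Euc n) :=
  {ζ | ∃ t : ℕ → ℝ, ∃ dk ζk : ℕ → Euc n,
    (∀ k, 0 < t k) ∧ Tendsto t atTop (𝓝 0) ∧ Tendsto dk atTop (𝓝 d) ∧
    Tendsto ζk atTop (𝓝 ζ) ∧ ∀ k, ζk k ∈ regNormal Ω (xb + t k • dk k)}

/-- The regular (Fréchet) subdifferential of an extended-real-valued function. -/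
def regSubdiff {n : ℕ} (f : Euc n → EReal) (x : Euc n) : Set (Euc n) :=
  {ξ | ∀ ε > (0:ℝ), ∃ ρ > (0:ℝ), ∀ y, ‖y - x‖ < ρ →
    f x + (((@inner ℝ _ _ ξ (y - x)) - ε * ‖y - x‖ : ℝ) : EReal) ≤ f y}

/-- The limiting (Mordukhovich) subdifferential. -/
def limSubdiff {n : ℕ} (f : Euc n → EReal) (x : Euc n) : Set (Euc n) :=
  {ξ | ∃ xk ξk : ℕ → Euc n, Tendsto xk atTop (𝓝 x) ∧
    Tendsto (fun k => f (xk k)) atTop (𝓝 (f x)) ∧ Tendsto ξk atTop (𝓝 ξ) ∧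
    ∀ k, ξk k ∈ regSubdiff f (xk k)}

/-- The directional limiting subdifferential ∂f(xb; u). -/
def dirLimSubdiff {n : ℕ} (f : Euc n → EReal) (xb u : Euc n) : Set (Euc n) :=
  {ξ | ∃ xk ξk : ℕ → Euc n, TendstoDir xk xb u ∧
    Tendsto (fun k => f (xk k)) atTop (𝓝 (f xb)) ∧ Tendsto ξk atTop (𝓝 ξ) ∧
    ∀ k, ξk k ∈ regSubdiff f (xk k)}

/-- The directional singular subdifferential ∂^∞ f(xb; u). -/
def dirSingSubdiff {n : ℕ} (f : Euc n → EReal) (xb u : Euc n) : Set (Euc n) :=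
  {ξ | ∃ xk ξk : ℕ → Euc n, ∃ τ : ℕ → ℝ, TendstoDir xk xb u ∧
    (∀ k, 0 < τ k) ∧ Tendsto τ atTop (𝓝 0) ∧
    Tendsto (fun k => τ k • ξk k) atTop (𝓝 ξ) ∧
    Tendsto (fun k => f (xk k)) atTop (𝓝 (f xb)) ∧
    ∀ k, ξk k ∈ regSubdiff f (xk k)}

/-- f is continuous at xb in direction u. -/
def DirContinuous {n : ℕ} (f : Euc n → EReal) (xb u : Euc n) : Prop :=
  ∀ xk : ℕ → Euc n, TendstoDir xk xb u →
    Tendsto (fun k => f (xk k)) atTop (𝓝 (f xb))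

/-- f is locally lower semicontinuous at xb in direction u (with f xb = fx ∈ ℝ). -/
def DirLocLSC {n : ℕ} (f : Euc n → EReal) (xb u : Euc n) (fx : ℝ) : Prop :=
  ∃ ε > (0:ℝ), ∃ δ > (0:ℝ), IsClosed
    ({p : Euc n × ℝ | f p.1 ≤ (p.2 : EReal)} ∩
     (closure (dirNbhdPt xb ε δ u) ×ˢ Metric.closedBall fx ε))

/-- f is Lipschitz continuous around xb in direction u. -/
def DirLipschitz {n : ℕ} (f : Euc n → EReal) (xb u : Euc n) : Prop :=
  ∃ L : ℝ, ∃ ε > (0:ℝ), ∃ δ > (0:ℝ),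
    ∀ a ∈ dirNbhdPt xb ε δ u, ∀ b ∈ dirNbhdPt xb ε δ u,
      ∃ fa fb : ℝ, f a = (fa : EReal) ∧ f b = (fb : EReal) ∧
        |fa - fb| ≤ L * ‖a - b‖

/-- The optimal value function of the parametric problem min f(x,y) s.t. P(x,y) ∈ Γ. -/
def valueFn {n m p : ℕ} (f : Euc n × Euc m → ℝ) (P : Euc n × Euc m → Euc p)
    (Γ : Set (Euc p)) (x : Euc n) : EReal :=
  sInf ((fun y => ((f (x, y) : ℝ) : EReal)) '' {y | P (x, y) ∈ Γ})

/-- The solution map of the parametric problem. -/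
def solnSet {n m p : ℕ} (f : Euc n × Euc m → ℝ) (P : Euc n × Euc m → Euc p)
    (Γ : Set (Euc p)) (x : Euc n) : Set (Euc m) :=
  {y | P (x, y) ∈ Γ ∧ ((f (x, y) : ℝ) : EReal) = valueFn f P Γ x}

/-- The graphical derivative of φ at x in direction u. -/
def graphDeriv {n m : ℕ} (φ : Euc n → Euc m) (x u : Euc n) : Set (Euc m) :=
  {d | ∃ t : ℕ → ℝ, ∃ uk : ℕ → Euc n, (∀ k, 0 < t k) ∧ Tendsto t atTop (𝓝 0) ∧
    Tendsto uk atTop (𝓝 u) ∧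
    Tendsto (fun k => (t k)⁻¹ • (φ (x + t k • uk k) - φ x)) atTop (𝓝 d)}

end

lemma limNormal_approx {n : ℕ} {Ω : Set (Euc n)} {x ζ : Euc n}
    (h : ζ ∈ limNormal Ω x) {ε : ℝ} (hε : 0 < ε) :
    ∃ y η : Euc n, η ∈ regNormal Ω y ∧ ‖y - x‖ < ε ∧ ‖η - ζ‖ < ε := by
  obtain ⟨xk, ζk, hxk, hζk, hmem⟩ := h
  obtain ⟨N1, hN1⟩ := (Metric.tendsto_atTop.1 hxk) ε hε
  obtain ⟨N2, hN2⟩ := (Metric.tendsto_atTop.1 hζk) ε hε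
  refine ⟨xk (max N1 N2), ζk (max N1 N2), hmem _, ?_, ?_⟩
  · rw [← dist_eq_norm]; exact hN1 _ (le_max_left _ _)
  · rw [← dist_eq_norm]; exact hN2 _ (le_max_right _ _)

theorem stmt_5 {n : ℕ} (Ω : Set (Euc n)) (hΩ : IsClosed Ω) (xb : Euc n)
    (hx : xb ∈ Ω) (d : Euc n) :
    dirNormal Ω xb d =
      {ζ | ∃ t : ℕ → ℝ, ∃ dk ζk : ℕ → Euc n,
        (∀ k, 0 < t k) ∧ Tendsto t atTop (𝓝 0) ∧ Tendsto dk atTop (𝓝 d) ∧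
        Tendsto ζk atTop (𝓝 ζ) ∧ ∀ k, ζk k ∈ limNormal Ω (xb + t k • dk k)} := by
  ext ζ
  constructor
  · rintro ⟨t, dk, ζk, ht, ht0, hdk, hζk, hmem⟩
    exact ⟨t, dk, ζk, ht, ht0, hdk, hζk, fun k =>
      ⟨fun _ => xb + t k • dk k, fun _ => ζk k, tendsto_const_nhds,
        tendsto_const_nhds, fun _ => hmem k⟩⟩
  · rintro ⟨t, dk, ζk, ht, ht0, hdk, hζk, hmem⟩
    have hεpos : ∀ k : ℕ, (0:ℝ) < min (t k / (k+1)) (1/(k+1)) := by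
      intro k
      have hk : (0:ℝ) < (k:ℝ) + 1 := by positivity
      exact lt_min (div_pos (ht k) hk) (by positivity)
    choose y η hreg hy hη using fun k => limNormal_approx (hmem k) (hεpos k)
    have hinv : Tendsto (fun m : ℕ => (1:ℝ)/(m+1)) atTop (𝓝 0) :=
      tendsto_one_div_add_atTop_nhds_zero_nat
    have hbound1 : ∀ k, ‖(t k)⁻¹ • (y k - (xb + t k • dk k))‖ ≤ 1/(k+1) := by
      intro k
      rw [norm_smul, norm_inv, Real.norm_eq_abs, abs_of_pos (ht k)]
      have h1 : ‖y k - (xb + t k • dk k)‖ ≤ t k / (k+1) :=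
        le_of_lt ((hy k).trans_le (min_le_left _ _))
      calc (t k)⁻¹ * ‖y k - (xb + t k • dk k)‖
          ≤ (t k)⁻¹ * (t k / (k+1)) := by
            exact mul_le_mul_of_nonneg_left h1 (inv_nonneg.2 (ht k).le)
        _ = 1/(k+1) := by
            rw [← mul_div_assoc, inv_mul_cancel₀ (ht k).ne']
    have he1 : Tendsto (fun k => (t k)⁻¹ • (y k - (xb + t k • dk k))) atTop (𝓝 0) :=
      squeeze_zero_norm hbound1 hinv
    have he2 : Tendsto (fun k => η k - ζk k) atTop (𝓝 0) :=
      squeeze_zero_norm (fun k => ((hη k).trans_le (min_le_right _ _)).le) hinv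
    refine ⟨t, fun k => dk k + (t k)⁻¹ • (y k - (xb + t k • dk k)), η, ht, ht0, ?_, ?_, ?_⟩
    · have := hdk.add he1
      simpa using this
    · have : Tendsto (fun k => ζk k + (η k - ζk k)) atTop (𝓝 (ζ + 0)) := hζk.add he2
      simpa using this
    · intro k
      have hxeq : xb + t k • (dk k + (t k)⁻¹ • (y k - (xb + t k • dk k))) = y k := by
        rw [smul_add, smul_inv_smul₀ (ht k).ne']
        abel
      rw [hxeq]
      exact hreg k
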